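/- arXiv:2110.14367 — 3 statements merged into one kernel-verified Lean document; each statement's English description precedes it below -/
import Mathlib

section
/- Let U ⊆ ℝ² be open, let X : U → ℝ³ be differentiable at u ∈ U with X(u) ≠ 0, and let n ∈ ℝ³ satisfy ‖n‖ = 1 and ⟨n, DX(u)v⟩ = 0 for every v ∈ ℝ². Define the inverted map Ψ : U → ℝ³ by Ψ = X/‖X‖², and set ν := n − 2⟨X(u), n⟩ X(u)/‖X(u)‖². Then ‖ν‖ = 1 and ⟨ν, DΨ(u)v⟩ = 0 for every v ∈ ℝ²; that is, ν is a unit normal of the inverted surface at u. -/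
open scoped RealInnerProductSpace

/-- If `X : U → ℝ³` is differentiable at `u` with `X u ≠ 0` and `n` is a unit
vector orthogonal to the image of `DX(u)`, then `ν = n - 2⟨X u, n⟩ X u / ‖X u‖²` is a unit
vector orthogonal to the image of `DΨ(u)` where `Ψ = X / ‖X‖²` is the inverted surface. -/
theorem unit_normal_of_inverted_surface
    {U : Set (EuclideanSpace ℝ (Fin 2))} (hU : IsOpen U)
    (X : EuclideanSpace ℝ (Fin 2) → EuclideanSpace ℝ (Fin 3))
    {u : EuclideanSpace ℝ (Fin 2)} (hu : u ∈ U)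
    (hX : DifferentiableAt ℝ X u) (hX0 : X u ≠ 0)
    (n : EuclideanSpace ℝ (Fin 3)) (hn : ‖n‖ = 1)
    (hperp : ∀ v : EuclideanSpace ℝ (Fin 2), ⟪n, fderiv ℝ X u v⟫ = 0) :
    let Ψ : EuclideanSpace ℝ (Fin 2) → EuclideanSpace ℝ (Fin 3) :=
      fun w => (‖X w‖ ^ 2)⁻¹ • X w
    let ν : EuclideanSpace ℝ (Fin 3) :=
      n - ((2 * ⟪X u, n⟫) / ‖X u‖ ^ 2) • X u
    ‖ν‖ = 1 ∧ ∀ v : EuclideanSpace ℝ (Fin 2), ⟪ν, fderiv ℝ Ψ u v⟫ = 0 := by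
  intro Ψ ν
  set x := X u with hx
  set f : ℝ := ‖x‖ ^ 2 with hfdef
  have hf0 : f ≠ 0 := pow_ne_zero _ (norm_ne_zero_iff.mpr hX0)
  set c : ℝ := (2 * ⟪x, n⟫) / f with hcdef
  set F := fderiv ℝ X u with hF
  have hXF : HasFDerivAt X F u := hX.hasFDerivAt
  -- derivative of w ↦ ⟪X w, X w⟫
  have hg : HasFDerivAt (fun w => ⟪X w, X w⟫)
      ((fderivInnerCLM ℝ (x, x)).comp (F.prod F)) u := hXF.inner ℝ hXF
  have hgeq : (fun w => ‖X w‖ ^ 2) = fun w => ⟪X w, X w⟫ := by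
    funext w; rw [real_inner_self_eq_norm_sq]
  have hg' : HasFDerivAt (fun w => ‖X w‖ ^ 2)
      ((fderivInnerCLM ℝ (x, x)).comp (F.prod F)) u := by rw [hgeq]; exact hg
  have hinv : HasFDerivAt (fun w => (‖X w‖ ^ 2)⁻¹)
      (-(f ^ 2)⁻¹ • ((fderivInnerCLM ℝ (x, x)).comp (F.prod F))) u := by
    have := (hasDerivAt_inv hf0).comp_hasFDerivAt u hg'
    exact this
  have hΨ : HasFDerivAt Ψ
      ((f⁻¹) • F + (-(f ^ 2)⁻¹ • ((fderivInnerCLM ℝ (x, x)).comp (F.prod F))).smulRight x) u :=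
    hinv.smul hXF
  have hfd : fderiv ℝ Ψ u =
      (f⁻¹) • F + (-(f ^ 2)⁻¹ • ((fderivInnerCLM ℝ (x, x)).comp (F.prod F))).smulRight x :=
    hΨ.fderiv
  have hnx : ∀ v, ⟪ν, fderiv ℝ Ψ u v⟫ = 0 := by
    intro v
    rw [hfd]
    have h1 : ⟪n, F v⟫ = 0 := hperp v
    simp only [ContinuousLinearMap.add_apply, ContinuousLinearMap.smul_apply,
      ContinuousLinearMap.smulRight_apply, ContinuousLinearMap.comp_apply,
      ContinuousLinearMap.prod_apply, fderivInnerCLM_apply]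
    rw [inner_add_right, inner_smul_right, inner_smul_right]
    have h2 : ⟪ν, F v⟫ = -c * ⟪x, F v⟫ := by
      show ⟪n - c • x, F v⟫ = _
      rw [inner_sub_left, real_inner_smul_left, h1]; ring
    have h3 : ⟪ν, x⟫ = -⟪x, n⟫ := by
      show ⟪n - c • x, x⟫ = _
      rw [inner_sub_left, real_inner_smul_left, real_inner_self_eq_norm_sq, real_inner_comm]
      rw [hcdef, hfdef]
      field_simp
      ring
    rw [h2, h3]
    have : (⟪x, F v⟫ + ⟪F v, x⟫ : ℝ) = 2 * ⟪x, F v⟫ := by rw [real_inner_comm]; ring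
    rw [this, hcdef]
    field_simp
    rw [smul_eq_mul, one_div, neg_mul, mul_neg, ← mul_assoc (f ^ 2), mul_inv_cancel₀ (pow_ne_zero 2 hf0)]
    ring
  constructor
  · have key : c * f = 2 * ⟪x, n⟫ := by rw [hcdef]; field_simp
    have h : ‖ν‖ ^ 2 = 1 := by
      show ‖n - c • x‖ ^ 2 = 1
      rw [norm_sub_sq_real, real_inner_smul_right, norm_smul, mul_pow, hn,
        Real.norm_eq_abs, sq_abs, ← hfdef]
      linear_combination c * key - 2 * c * real_inner_comm x n
    nlinarith [norm_nonneg ν]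
  · exact hnx
end

section
/- Let U ⊆ ℝ² be open, let X : U → ℝ³ be twice continuously differentiable and conformal with positive conformal factor, i.e. ⟨∂ᵢX, ∂ⱼX⟩ = E δᵢⱼ on U with E > 0, and let n : U → ℝ³ be differentiable with ‖n‖ ≡ 1 and ⟨n, ∂ⱼX⟩ ≡ 0 on U for j = 1, 2. Then for each component index k ∈ {1, 2, 3} and at every point of U: Σ_{j=1,2} Σ_{l=1,2,3} Xˡ ( ∂ⱼnᵏ ∂ⱼXˡ − ∂ⱼnˡ ∂ⱼXᵏ ) = 0. -/
open scoped RealInnerProductSpace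

/-- The partial derivative in the `j`-th coordinate direction of a map defined on `ℝ²`. -/
noncomputable def pd {F : Type*} [NormedAddCommGroup F] [NormedSpace ℝ F]
    (j : Fin 2) (X : EuclideanSpace ℝ (Fin 2) → F) (u : EuclideanSpace ℝ (Fin 2)) : F :=
  fderiv ℝ X u (EuclideanSpace.single j 1)

/-- Expansion of a vector orthogonal to the unit normal `m` in the orthogonal tangent
basis `p, q` (each of squared norm `Eu > 0`). -/
lemma expand_tangent (p q m w : EuclideanSpace ℝ (Fin 3)) (Eu : ℝ) (hEu : 0 < Eu)
    (hpp : ⟪p, p⟫ = Eu) (hqq : ⟪q, q⟫ = Eu) (hpq : ⟪p, q⟫ = 0)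
    (hmp : ⟪m, p⟫ = 0) (hmq : ⟪m, q⟫ = 0) (hm : ‖m‖ = 1)
    (hmw : ⟪m, w⟫ = 0) :
    w = Eu⁻¹ • (⟪p, w⟫ • p + ⟪q, w⟫ • q) := by
  have hqp : ⟪q, p⟫ = 0 := by rw [real_inner_comm, hpq]
  have hpm : ⟪p, m⟫ = 0 := by rw [real_inner_comm, hmp]
  have hqm : ⟪q, m⟫ = 0 := by rw [real_inner_comm, hmq]
  have hmm : ⟪m, m⟫ = 1 := by rw [real_inner_self_eq_norm_sq, hm]; norm_num
  have hp0 : p ≠ 0 := by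
    intro h; rw [h, inner_zero_left] at hpp; exact absurd hpp.symm hEu.ne'
  have hq0 : q ≠ 0 := by
    intro h; rw [h, inner_zero_left] at hqq; exact absurd hqq.symm hEu.ne'
  have hm0 : m ≠ 0 := by
    intro h; rw [h, norm_zero] at hm; norm_num at hm
  set v : Fin 3 → EuclideanSpace ℝ (Fin 3) := ![p, q, m] with hv
  have hv0 : v 0 = p := rfl
  have hv1 : v 1 = q := rfl
  have hv2 : v 2 = m := rfl
  have hli : LinearIndependent ℝ v := by
    apply linearIndependent_of_ne_zero_of_inner_eq_zero
    · intro i; fin_cases i <;> assumption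
    · intro i j hij; fin_cases i <;> fin_cases j <;> simp_all
  have hsp : Submodule.span ℝ (Set.range v) = ⊤ :=
    hli.span_eq_top_of_card_eq_finrank (by simp)
  have hwmem : w ∈ Submodule.span ℝ (Set.range v) := by rw [hsp]; trivial
  obtain ⟨c, hc⟩ := (Submodule.mem_span_range_iff_exists_fun ℝ).mp hwmem
  rw [Fin.sum_univ_three, hv0, hv1, hv2] at hc
  have h2 : c 2 = 0 := by
    have : ⟪m, w⟫ = c 2 := by
      rw [← hc, inner_add_right, inner_add_right, real_inner_smul_right,
        real_inner_smul_right, real_inner_smul_right, hmp, hmq, hmm]; ring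
    rw [hmw] at this; exact this.symm
  have h0 : ⟪p, w⟫ = c 0 * Eu := by
    rw [← hc, inner_add_right, inner_add_right, real_inner_smul_right,
      real_inner_smul_right, real_inner_smul_right, hpp, hpq, hpm]; ring
  have h1 : ⟪q, w⟫ = c 1 * Eu := by
    rw [← hc, inner_add_right, inner_add_right, real_inner_smul_right,
      real_inner_smul_right, real_inner_smul_right, hqp, hqq, hqm]; ring
  rw [h0, h1, ← hc, h2, zero_smul, add_zero, smul_add, smul_smul, smul_smul]
  congr 2 <;> field_simp

/-- For a conformal `C²` immersion `X : U → ℝ³` with conformal factor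
`E > 0` and differentiable unit normal field `n`, the antisymmetric sum
`Σⱼ Σₗ Xˡ (∂ⱼnᵏ ∂ⱼXˡ − ∂ⱼnˡ ∂ⱼXᵏ)` vanishes for each component index `k`. -/
theorem antisymmetric_cancellation
    {U : Set (EuclideanSpace ℝ (Fin 2))} (hU : IsOpen U)
    (X : EuclideanSpace ℝ (Fin 2) → EuclideanSpace ℝ (Fin 3))
    (hC : ContDiffOn ℝ 2 X U)
    (E : EuclideanSpace ℝ (Fin 2) → ℝ) (hE : ∀ u ∈ U, 0 < E u)
    (hconf : ∀ u ∈ U, ∀ i j : Fin 2, ⟪pd i X u, pd j X u⟫ = if i = j then E u else 0)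
    (n : EuclideanSpace ℝ (Fin 2) → EuclideanSpace ℝ (Fin 3))
    (hn : ∀ u ∈ U, DifferentiableAt ℝ n u)
    (hn1 : ∀ u ∈ U, ‖n u‖ = 1)
    (hperp : ∀ u ∈ U, ∀ j : Fin 2, ⟪n u, pd j X u⟫ = 0) :
    ∀ u ∈ U, ∀ k : Fin 3,
      ∑ j : Fin 2, ∑ l : Fin 3,
        X u l * (pd j n u k * pd j X u l - pd j n u l * pd j X u k) = 0 := by
  intro u hu k
  have hXc2 : ContDiffAt ℝ 2 X u := hC.contDiffAt (hU.mem_nhds hu)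
  have hd : DifferentiableAt ℝ (fderiv ℝ X) u :=
    (hXc2.fderiv_right (n := 2) (m := 1) (by norm_num)).differentiableAt one_ne_zero
  have hdX : ∀ i : Fin 2, DifferentiableAt ℝ (pd i X) u :=
    fun i => hd.clm_apply (differentiableAt_const _)
  -- symmetry of second derivatives
  have hsymX : ∀ i j : Fin 2, pd j (pd i X) u = pd i (pd j X) u := by
    intro i j
    have hsym := hXc2.isSymmSndFDerivAt (by simp [minSmoothness_of_isRCLikeNormedField])
    have key : ∀ a b : Fin 2, pd b (fun v => fderiv ℝ X v (EuclideanSpace.single a 1)) u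
        = fderiv ℝ (fderiv ℝ X) u (EuclideanSpace.single b 1) (EuclideanSpace.single a 1) := by
      intro a b
      have : fderiv ℝ (fun v => fderiv ℝ X v (EuclideanSpace.single a 1)) u
          = (fderiv ℝ (fderiv ℝ X) u).flip (EuclideanSpace.single a 1) := by
        rw [fderiv_clm_apply hd (differentiableAt_const _)]
        simp
      simp [pd, this]
    show pd j (fun v => fderiv ℝ X v _) u = pd i (fun v => fderiv ℝ X v _) u
    rw [key, key, hsym.eq]
  -- differentiating ⟪n, ∂ᵢX⟫ = 0
  have hdiffperp : ∀ i j : Fin 2,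
      ⟪n u, pd j (pd i X) u⟫ + ⟪pd j n u, pd i X u⟫ = 0 := by
    intro i j
    have hz : fderiv ℝ (fun v => ⟪n v, pd i X v⟫) u = 0 := by
      have : (fun v => ⟪n v, pd i X v⟫) =ᶠ[nhds u] fun _ => (0:ℝ) := by
        filter_upwards [hU.mem_nhds hu] with v hv using hperp v hv i
      rw [this.fderiv_eq]; exact fderiv_const_apply 0
    have := fderiv_inner_apply (𝕜 := ℝ) (hn u hu) (hdX i) (EuclideanSpace.single j 1)
    rw [hz] at this
    simpa [pd] using this.symm
  -- ∂ⱼn ⊥ n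
  have hnn : ∀ j : Fin 2, ⟪n u, pd j n u⟫ = 0 := by
    intro j
    have hz : fderiv ℝ (fun v => ⟪n v, n v⟫) u = 0 := by
      have : (fun v => ⟪n v, n v⟫) =ᶠ[nhds u] fun _ => (1:ℝ) := by
        filter_upwards [hU.mem_nhds hu] with v hv
        rw [real_inner_self_eq_norm_sq, hn1 v hv]; norm_num
      rw [this.fderiv_eq]; exact fderiv_const_apply 1
    have := fderiv_inner_apply (𝕜 := ℝ) (hn u hu) (hn u hu) (EuclideanSpace.single j 1)
    rw [hz] at this
    have h2 : ⟪n u, pd j n u⟫ + ⟪pd j n u, n u⟫ = 0 := by simpa [pd] using this.symm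
    have h3 := real_inner_comm (pd j n u) (n u)
    linarith
  -- key symmetry of the second fundamental form coefficient
  have hsym : ⟪pd 0 X u, pd 1 n u⟫ = ⟪pd 1 X u, pd 0 n u⟫ := by
    have h01 := hdiffperp 0 1
    have h10 := hdiffperp 1 0
    rw [hsymX 0 1] at h01
    rw [real_inner_comm (pd 1 n u) (pd 0 X u), real_inner_comm (pd 0 n u) (pd 1 X u)]
    linarith
  -- expansion of ∂ⱼn in the tangent basis
  have hexp : ∀ j : Fin 2, pd j n u = (E u)⁻¹ •
      (⟪pd 0 X u, pd j n u⟫ • pd 0 X u + ⟪pd 1 X u, pd j n u⟫ • pd 1 X u) := by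
    intro j
    apply expand_tangent _ _ _ _ _ (hE u hu)
    · simpa using hconf u hu 0 0
    · simpa using hconf u hu 1 1
    · simpa using hconf u hu 0 1
    · exact hperp u hu 0
    · exact hperp u hu 1
    · exact hn1 u hu
    · exact hnn j
  have hcomp : ∀ (j : Fin 2) (t : Fin 3), pd j n u t = (E u)⁻¹ *
      (⟪pd 0 X u, pd j n u⟫ * pd 0 X u t + ⟪pd 1 X u, pd j n u⟫ * pd 1 X u t) := by
    intro j t
    conv_lhs => rw [hexp j]
    simp [PiLp.smul_apply, PiLp.add_apply, smul_eq_mul]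
    ring
  -- final algebraic cancellation
  rw [Fin.sum_univ_two, ← Finset.sum_add_distrib]
  apply Finset.sum_eq_zero
  intro l _
  rw [hcomp 0 k, hcomp 0 l, hcomp 1 k, hcomp 1 l, hsym]
  ring
end

section
/- Let U ⊆ ℝ² be open, let X : U → ℝ³ be twice continuously differentiable with X(u) ≠ 0 for all u ∈ U, harmonic components ∂₁∂₁X + ∂₂∂₂X = 0, and conformal: ⟨∂ᵢX, ∂ⱼX⟩ = E δᵢⱼ on U with E > 0. Let n : U → ℝ³ be twice continuously differentiable with ‖n‖ ≡ 1 and ⟨n, ∂ⱼX⟩ ≡ 0 for j = 1, 2, and let K : U → ℝ be a function such that Δnᵏ = 2 K E nᵏ on U for k = 1, 2, 3 (i.e. each component of n lies in the kernel of the Jacobi operator L_g = Δ_g − 2K_g). Define ν := n − 2⟨X, n⟩ X/‖X‖². Then for each k ∈ {1, 2, 3}: (1/E) Δ(‖X‖² νᵏ) − 2 K ‖X‖² νᵏ = 4 nᵏ on U. -/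
open scoped RealInnerProductSpace

/-- The flat Laplacian `Δ = ∂₁∂₁ + ∂₂∂₂` of a real-valued function on `ℝ²`. -/
noncomputable def flatLap (f : EuclideanSpace ℝ (Fin 2) → ℝ)
    (u : EuclideanSpace ℝ (Fin 2)) : ℝ :=
  pd 0 (pd 0 f) u + pd 1 (pd 1 f) u

section Toolkit

variable {F : Type*} [NormedAddCommGroup F] [NormedSpace ℝ F]
variable {U : Set (EuclideanSpace ℝ (Fin 2))} {u : EuclideanSpace ℝ (Fin 2)}

lemma pd_congr {f g : EuclideanSpace ℝ (Fin 2) → F} (h : f =ᶠ[nhds u] g) (j : Fin 2) :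
    pd j f u = pd j g u := by
  unfold pd; rw [Filter.EventuallyEq.fderiv_eq h]

lemma pd_congrOn (hU : IsOpen U) {f g : EuclideanSpace ℝ (Fin 2) → F}
    (h : ∀ w ∈ U, f w = g w) (hu : u ∈ U) (j : Fin 2) :
    pd j f u = pd j g u :=
  pd_congr (Filter.eventuallyEq_of_mem (hU.mem_nhds hu) h) j

lemma pd_proj (j : Fin 2) (k : Fin 3) {A : EuclideanSpace ℝ (Fin 2) → EuclideanSpace ℝ (Fin 3)}
    (hA : DifferentiableAt ℝ A u) :
    pd j (fun w => A w k) u = pd j A u k := by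
  have h1 : (fun w => A w k) = fun w => (EuclideanSpace.proj (𝕜 := ℝ) k) (A w) := rfl
  unfold pd
  rw [h1, fderiv_clm_apply (differentiableAt_const _) hA]
  simp

lemma pd_inner (j : Fin 2) {A B : EuclideanSpace ℝ (Fin 2) → EuclideanSpace ℝ (Fin 3)}
    (hA : DifferentiableAt ℝ A u) (hB : DifferentiableAt ℝ B u) :
    pd j (fun w => ⟪A w, B w⟫) u = ⟪pd j A u, B u⟫ + ⟪A u, pd j B u⟫ := by
  unfold pd
  rw [fderiv_inner_apply ℝ hA hB]
  rw [add_comm]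

lemma pd_smul (j : Fin 2) {c : EuclideanSpace ℝ (Fin 2) → ℝ}
    {A : EuclideanSpace ℝ (Fin 2) → F}
    (hc : DifferentiableAt ℝ c u) (hA : DifferentiableAt ℝ A u) :
    pd j (fun w => c w • A w) u = pd j c u • A u + c u • pd j A u := by
  unfold pd
  rw [fderiv_fun_smul hc hA]
  simp [add_comm]

lemma pd_sub (j : Fin 2) {A B : EuclideanSpace ℝ (Fin 2) → F}
    (hA : DifferentiableAt ℝ A u) (hB : DifferentiableAt ℝ B u) :
    pd j (fun w => A w - B w) u = pd j A u - pd j B u := by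
  unfold pd
  rw [fderiv_fun_sub hA hB]
  rfl

lemma pd_add (j : Fin 2) {A B : EuclideanSpace ℝ (Fin 2) → F}
    (hA : DifferentiableAt ℝ A u) (hB : DifferentiableAt ℝ B u) :
    pd j (fun w => A w + B w) u = pd j A u + pd j B u := by
  unfold pd
  rw [fderiv_fun_add hA hB]
  rfl

lemma pd_const_mul (j : Fin 2) (c : ℝ) {f : EuclideanSpace ℝ (Fin 2) → ℝ}
    (hf : DifferentiableAt ℝ f u) :
    pd j (fun w => c * f w) u = c * pd j f u := by
  unfold pd
  rw [fderiv_const_mul hf]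
  rfl

lemma pd_const (j : Fin 2) (c : F) : pd j (fun _ => c) u = 0 := by
  unfold pd
  rw [fderiv_fun_const]
  rfl

lemma pd_comm {A : EuclideanSpace ℝ (Fin 2) → F} (hU : IsOpen U)
    (hA : ContDiffOn ℝ 2 A U) (hu : u ∈ U) (i j : Fin 2) :
    pd i (pd j A) u = pd j (pd i A) u := by
  have hAt : ContDiffAt ℝ 2 A u := hA.contDiffAt (hU.mem_nhds hu)
  have hsym := hAt.isSymmSndFDerivAt (by simp)
  have hd : DifferentiableAt ℝ (fderiv ℝ A) u := by
    have h1 : ContDiffOn ℝ 1 (fderiv ℝ A) U :=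
      ((contDiffOn_succ_iff_fderiv_of_isOpen hU).1 (by exact_mod_cast hA)).2.2
    exact (h1.contDiffAt (hU.mem_nhds hu)).differentiableAt one_ne_zero
  have key : ∀ a b : Fin 2, pd a (pd b A) u =
      fderiv ℝ (fderiv ℝ A) u (EuclideanSpace.single a 1) (EuclideanSpace.single b 1) := by
    intro a b
    unfold pd
    rw [fderiv_clm_apply hd (differentiableAt_const _)]
    simp
  rw [key i j, key j i]
  exact hsym _ _

end Toolkit

open scoped RealInnerProductSpace


lemma tangent_decomp {E : ℝ} (hE : 0 < E) (X0 X1 nn v : EuclideanSpace ℝ (Fin 3))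
    (h00 : ⟪X0, X0⟫ = E) (h11 : ⟪X1, X1⟫ = E) (h01 : ⟪X0, X1⟫ = 0)
    (hn0 : ⟪nn, X0⟫ = 0) (hn1 : ⟪nn, X1⟫ = 0) (hnn : ‖nn‖ = 1)
    (hv : ⟪nn, v⟫ = 0) :
    v = (E⁻¹ * ⟪X0, v⟫) • X0 + (E⁻¹ * ⟪X1, v⟫) • X1 := by
  set r : ℝ := (Real.sqrt E)⁻¹ with hr
  have hrr : r * r = E⁻¹ := by rw [hr, ← mul_inv, Real.mul_self_sqrt hE.le]
  have hEinv : E⁻¹ * E = 1 := inv_mul_cancel₀ hE.ne'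
  have hon : Orthonormal ℝ ![r • X0, r • X1, nn] := by
    rw [orthonormal_iff_ite]
    intro i j
    have hrE : r * (r * E) = 1 := by rw [← mul_assoc, hrr]; exact hEinv
    fin_cases i <;> fin_cases j
    · show ⟪r • X0, r • X0⟫ = 1
      rw [real_inner_smul_left, real_inner_smul_right, h00]; exact hrE
    · show ⟪r • X0, r • X1⟫ = 0
      rw [real_inner_smul_left, real_inner_smul_right, h01]; ring
    · show ⟪r • X0, nn⟫ = 0
      rw [real_inner_smul_left, real_inner_comm, hn0]; ring
    · show ⟪r • X1, r • X0⟫ = 0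
      rw [real_inner_smul_left, real_inner_smul_right, real_inner_comm, h01]; ring
    · show ⟪r • X1, r • X1⟫ = 1
      rw [real_inner_smul_left, real_inner_smul_right, h11]; exact hrE
    · show ⟪r • X1, nn⟫ = 0
      rw [real_inner_smul_left, real_inner_comm, hn1]; ring
    · show ⟪nn, r • X0⟫ = 0
      rw [real_inner_smul_right, hn0]; ring
    · show ⟪nn, r • X1⟫ = 0
      rw [real_inner_smul_right, hn1]; ring
    · show ⟪nn, nn⟫ = 1
      rw [real_inner_self_eq_norm_sq, hnn]; norm_num
  have hcard : Fintype.card (Fin 3) = Module.finrank ℝ (EuclideanSpace ℝ (Fin 3)) := by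
    simp [finrank_euclideanSpace_fin]
  have hspan : ⊤ ≤ Submodule.span ℝ (Set.range ![r • X0, r • X1, nn]) :=
    (hon.linearIndependent.span_eq_top_of_card_eq_finrank hcard).ge
  let b : OrthonormalBasis (Fin 3) ℝ (EuclideanSpace ℝ (Fin 3)) := OrthonormalBasis.mk hon hspan
  have hb : ∀ i, b i = ![r • X0, r • X1, nn] i := fun i => by
    simp [b, OrthonormalBasis.coe_mk]
  have key := b.sum_repr' v
  rw [Fin.sum_univ_three, hb 0, hb 1, hb 2] at key
  simp only [Matrix.cons_val_zero, Matrix.cons_val_one, Matrix.head_cons,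
    Matrix.cons_val_two, Matrix.tail_cons] at key
  rw [hv, zero_smul, add_zero, real_inner_smul_left, real_inner_smul_left,
    smul_smul, smul_smul] at key
  have c0 : r * ⟪X0, v⟫ * r = E⁻¹ * ⟪X0, v⟫ := by rw [← hrr]; ring
  have c1 : r * ⟪X1, v⟫ * r = E⁻¹ * ⟪X1, v⟫ := by rw [← hrr]; ring
  rw [c0, c1] at key
  exact key.symm

lemma S_vanishes {E : ℝ} (hE : 0 < E) (x X0 X1 nn N0 N1 : EuclideanSpace ℝ (Fin 3))
    (h00 : ⟪X0, X0⟫ = E) (h11 : ⟪X1, X1⟫ = E) (h01 : ⟪X0, X1⟫ = 0)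
    (hn0 : ⟪nn, X0⟫ = 0) (hn1 : ⟪nn, X1⟫ = 0) (hnn : ‖nn‖ = 1)
    (hN0 : ⟪nn, N0⟫ = 0) (hN1 : ⟪nn, N1⟫ = 0)
    (hsym : ⟪X0, N1⟫ = ⟪X1, N0⟫) :
    ⟪x, X0⟫ • N0 + ⟪x, X1⟫ • N1 - ⟪x, N0⟫ • X0 - ⟪x, N1⟫ • X1 = 0 := by
  have d0 := tangent_decomp hE X0 X1 nn N0 h00 h11 h01 hn0 hn1 hnn hN0
  have d1 := tangent_decomp hE X0 X1 nn N1 h00 h11 h01 hn0 hn1 hnn hN1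
  have hxN0 : ⟪x, N0⟫ = E⁻¹ * ⟪X0, N0⟫ * ⟪x, X0⟫ + E⁻¹ * ⟪X1, N0⟫ * ⟪x, X1⟫ := by
    conv_lhs => rw [d0]
    rw [inner_add_right, real_inner_smul_right, real_inner_smul_right]
  have hxN1 : ⟪x, N1⟫ = E⁻¹ * ⟪X0, N1⟫ * ⟪x, X0⟫ + E⁻¹ * ⟪X1, N1⟫ * ⟪x, X1⟫ := by
    conv_lhs => rw [d1]
    rw [inner_add_right, real_inner_smul_right, real_inner_smul_right]
  rw [hxN0, hxN1]
  nth_rewrite 1 [d0]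
  nth_rewrite 1 [d1]
  match_scalars
  · linear_combination (E⁻¹ * ⟪x, X1⟫) * hsym
  · linear_combination (-(E⁻¹ * ⟪x, X0⟫)) * hsym

/-- (Lemma 4.1 of the paper, in coordinates.) For a conformally
parametrized minimal surface `X` avoiding the origin, with conformal factor `E`,
unit normal `n` whose components are Jacobi fields (`Δnᵏ = 2KEnᵏ`), and with
`ν = n − 2⟨X, n⟩X/‖X‖²` the unit normal of the inverted surface, one has
`L_g(‖X‖² νᵏ) = (1/E)Δ(‖X‖² νᵏ) − 2K‖X‖² νᵏ = 4nᵏ`. -/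
theorem jacobi_operator_of_inverted_normal
    {U : Set (EuclideanSpace ℝ (Fin 2))} (hU : IsOpen U)
    (X : EuclideanSpace ℝ (Fin 2) → EuclideanSpace ℝ (Fin 3))
    (hC : ContDiffOn ℝ 2 X U)
    (hX0 : ∀ u ∈ U, X u ≠ 0)
    (hharm : ∀ u ∈ U, pd 0 (pd 0 X) u + pd 1 (pd 1 X) u = 0)
    (E : EuclideanSpace ℝ (Fin 2) → ℝ) (hE : ∀ u ∈ U, 0 < E u)
    (hconf : ∀ u ∈ U, ∀ i j : Fin 2, ⟪pd i X u, pd j X u⟫ = if i = j then E u else 0)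
    (n : EuclideanSpace ℝ (Fin 2) → EuclideanSpace ℝ (Fin 3))
    (hn : ContDiffOn ℝ 2 n U)
    (hn1 : ∀ u ∈ U, ‖n u‖ = 1)
    (hperp : ∀ u ∈ U, ∀ j : Fin 2, ⟪n u, pd j X u⟫ = 0)
    (K : EuclideanSpace ℝ (Fin 2) → ℝ)
    (hjac : ∀ u ∈ U, ∀ k : Fin 3,
      flatLap (fun w => n w k) u = 2 * K u * E u * n u k) :
    let ν : EuclideanSpace ℝ (Fin 2) → EuclideanSpace ℝ (Fin 3) :=
      fun w => n w - ((2 * ⟪X w, n w⟫) / ‖X w‖ ^ 2) • X w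
    ∀ u ∈ U, ∀ k : Fin 3,
      (E u)⁻¹ * flatLap (fun w => ‖X w‖ ^ 2 * ν w k) u
        - 2 * K u * (‖X u‖ ^ 2 * ν u k) = 4 * n u k := by
  intro ν u hu k
  -- differentiability package
  have hXd : ∀ w ∈ U, DifferentiableAt ℝ X w := fun w hw =>
    (hC.contDiffAt (hU.mem_nhds hw)).differentiableAt (by norm_num)
  have hnd : ∀ w ∈ U, DifferentiableAt ℝ n w := fun w hw =>
    (hn.contDiffAt (hU.mem_nhds hw)).differentiableAt (by norm_num)
  have hfX : ContDiffOn ℝ 1 (fderiv ℝ X) U :=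
    ((contDiffOn_succ_iff_fderiv_of_isOpen hU).1 (by exact_mod_cast hC)).2.2
  have hfn : ContDiffOn ℝ 1 (fderiv ℝ n) U :=
    ((contDiffOn_succ_iff_fderiv_of_isOpen hU).1 (by exact_mod_cast hn)).2.2
  have hpdX : ∀ (j : Fin 2), ∀ w ∈ U, DifferentiableAt ℝ (pd j X) w := by
    intro j w hw
    have h1 : DifferentiableAt ℝ (fderiv ℝ X) w :=
      (hfX.contDiffAt (hU.mem_nhds hw)).differentiableAt one_ne_zero
    exact h1.clm_apply (differentiableAt_const _)
  have hpdn : ∀ (j : Fin 2), ∀ w ∈ U, DifferentiableAt ℝ (pd j n) w := by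
    intro j w hw
    have h1 : DifferentiableAt ℝ (fderiv ℝ n) w :=
      (hfn.contDiffAt (hU.mem_nhds hw)).differentiableAt one_ne_zero
    exact h1.clm_apply (differentiableAt_const _)
  set Φ : EuclideanSpace ℝ (Fin 2) → EuclideanSpace ℝ (Fin 3) :=
    fun w => ⟪X w, X w⟫ • n w - (2 * ⟪X w, n w⟫) • X w with hΦdef
  have hΦd : ∀ w ∈ U, DifferentiableAt ℝ Φ w := fun w hw =>
    (((hXd w hw).inner ℝ (hXd w hw)).smul (hnd w hw)).sub
      ((((hXd w hw).inner ℝ (hnd w hw)).const_mul 2).smul (hXd w hw))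
  -- first derivative of Φ on U
  have hΦ1 : ∀ (i : Fin 2), ∀ w ∈ U, pd i Φ w =
      (2 * ⟪X w, pd i X w⟫) • n w + ⟪X w, X w⟫ • pd i n w -
        ((2 * (⟪pd i X w, n w⟫ + ⟪X w, pd i n w⟫)) • X w
          + (2 * ⟪X w, n w⟫) • pd i X w) := by
    intro i w hw
    have dX := hXd w hw
    have dn := hnd w hw
    have dXi := hpdX i w hw
    have dNi := hpdn i w hw
    rw [hΦdef]
    rw [pd_sub i ((dX.inner ℝ dX).fun_smul dn) (((dX.inner ℝ dn).const_mul 2).fun_smul dX)]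
    rw [pd_smul i (dX.inner ℝ dX) dn]
    rw [pd_smul i ((dX.inner ℝ dn).const_mul 2) dX]
    rw [pd_inner i dX dX]
    rw [pd_const_mul i 2 (dX.inner ℝ dn)]
    rw [pd_inner i dX dn]
    rw [real_inner_comm (X w) (pd i X w)]
    match_scalars <;> ring
  -- differentiability of pd i Φ at u
  have hΦ1d : ∀ i : Fin 2, DifferentiableAt ℝ (pd i Φ) u := by
    intro i
    have dX := hXd u hu
    have dn := hnd u hu
    have dXi := hpdX i u hu
    have dNi := hpdn i u hu
    have hrhs : DifferentiableAt ℝ (fun w =>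
        (2 * ⟪X w, pd i X w⟫) • n w + ⟪X w, X w⟫ • pd i n w -
          ((2 * (⟪pd i X w, n w⟫ + ⟪X w, pd i n w⟫)) • X w
            + (2 * ⟪X w, n w⟫) • pd i X w)) u := by
      have dXw : ∀ w ∈ U, DifferentiableAt ℝ X w := hXd
      exact ((((dX.inner ℝ dXi).const_mul 2).smul dn).add
          ((dX.inner ℝ dX).smul dNi)).sub
        (((((dXi.inner ℝ dn).add (dX.inner ℝ dNi)).const_mul 2).smul dX).add
          (((dX.inner ℝ dn).const_mul 2).smul dXi))
    exact (Filter.eventuallyEq_of_mem (hU.mem_nhds hu) (hΦ1 i)).differentiableAt_iff.2 hrhs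
  -- second derivative of Φ at u
  have key : ∀ i : Fin 2, pd i (pd i Φ) u =
      (2 * (⟪pd i X u, pd i X u⟫ + ⟪X u, pd i (pd i X) u⟫)) • n u
      + (4 * ⟪X u, pd i X u⟫) • pd i n u + ⟪X u, X u⟫ • pd i (pd i n) u
      - (2 * (⟪pd i (pd i X) u, n u⟫ + 2 * ⟪pd i X u, pd i n u⟫
          + ⟪X u, pd i (pd i n) u⟫)) • X u
      - (4 * ⟪X u, pd i n u⟫) • pd i X u - (2 * ⟪X u, n u⟫) • pd i (pd i X) u := by
    intro i
    have dX := hXd u hu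
    have dn := hnd u hu
    have dXi := hpdX i u hu
    have dNi := hpdn i u hu
    rw [pd_congrOn hU (hΦ1 i) hu i]
    rw [pd_sub i ((((dX.inner ℝ dXi).const_mul 2).fun_smul dn).fun_add
          ((dX.inner ℝ dX).fun_smul dNi))
        (((((dXi.inner ℝ dn).fun_add (dX.inner ℝ dNi)).const_mul 2).fun_smul dX).fun_add
          (((dX.inner ℝ dn).const_mul 2).fun_smul dXi))]
    rw [pd_add i (((dX.inner ℝ dXi).const_mul 2).fun_smul dn) ((dX.inner ℝ dX).fun_smul dNi)]
    rw [pd_add i ((((dXi.inner ℝ dn).fun_add (dX.inner ℝ dNi)).const_mul 2).fun_smul dX)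
        (((dX.inner ℝ dn).const_mul 2).fun_smul dXi)]
    rw [pd_smul i ((dX.inner ℝ dXi).const_mul 2) dn]
    rw [pd_smul i (dX.inner ℝ dX) dNi]
    rw [pd_smul i (((dXi.inner ℝ dn).fun_add (dX.inner ℝ dNi)).const_mul 2) dX]
    rw [pd_smul i ((dX.inner ℝ dn).const_mul 2) dXi]
    rw [pd_const_mul i 2 (dX.inner ℝ dXi)]
    rw [pd_const_mul i 2 ((dXi.inner ℝ dn).fun_add (dX.inner ℝ dNi))]
    rw [pd_const_mul i 2 (dX.inner ℝ dn)]
    rw [pd_inner i dX dXi]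
    rw [pd_inner i dX dX]
    rw [pd_add i (dXi.inner ℝ dn) (dX.inner ℝ dNi)]
    rw [pd_inner i dXi dn]
    rw [pd_inner i dX dNi]
    rw [pd_inner i dX dn]
    rw [real_inner_comm (X u) (pd i X u)]
    rw [real_inner_comm (n u) (pd i X u), hperp u hu i]
    match_scalars <;> ring
  -- geometric facts at u
  have hEu := hE u hu
  have fE0 : ⟪pd 0 X u, pd 0 X u⟫ = E u := by simpa using hconf u hu 0 0
  have fE1 : ⟪pd 1 X u, pd 1 X u⟫ = E u := by simpa using hconf u hu 1 1
  have f01 : ⟪pd 0 X u, pd 1 X u⟫ = 0 := by simpa using hconf u hu 0 1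
  have hp0 : ⟪n u, pd 0 X u⟫ = 0 := hperp u hu 0
  have hp1 : ⟪n u, pd 1 X u⟫ = 0 := hperp u hu 1
  have hn1u : ‖n u‖ = 1 := hn1 u hu
  -- harmonicity
  have f8 : pd 1 (pd 1 X) u = -pd 0 (pd 0 X) u :=
    eq_neg_of_add_eq_zero_right (hharm u hu)
  -- derivative of hperp
  have hpn : ∀ i j : Fin 2, ⟪pd i n u, pd j X u⟫ = -⟪n u, pd i (pd j X) u⟫ := by
    intro i j
    have hz : ∀ w ∈ U, (fun w' => ⟪n w', pd j X w'⟫) w = (fun _ => (0:ℝ)) w := by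
      intro w hw
      exact hperp w hw j
    have h0 : pd i (fun w => ⟪n w, pd j X w⟫) u = 0 := by
      rw [pd_congrOn hU hz hu i, pd_const]
    rw [pd_inner i (hnd u hu) (hpdX j u hu)] at h0
    linarith
  -- derivative of unit normal
  have hunit : ∀ i : Fin 2, ⟪n u, pd i n u⟫ = 0 := by
    intro i
    have hz : ∀ w ∈ U, (fun w' => ⟪n w', n w'⟫) w = (fun _ => (1:ℝ)) w := by
      intro w hw
      simp only
      rw [real_inner_self_eq_norm_sq, hn1 w hw]
      norm_num
    have h0 : pd i (fun w => ⟪n w, n w⟫) u = 0 := by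
      rw [pd_congrOn hU hz hu i, pd_const]
    rw [pd_inner i (hnd u hu) (hnd u hu)] at h0
    have hcomm := real_inner_comm (pd i n u) (n u)
    linarith
  -- symmetry of second fundamental form
  have hs : ⟪pd 0 X u, pd 1 n u⟫ = ⟪pd 1 X u, pd 0 n u⟫ := by
    rw [real_inner_comm (pd 1 n u) (pd 0 X u), real_inner_comm (pd 0 n u) (pd 1 X u)]
    rw [hpn 1 0, hpn 0 1, pd_comm hU hC hu 1 0]
  have ht : ⟪pd 1 X u, pd 1 n u⟫ = -⟪pd 0 X u, pd 0 n u⟫ := by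
    rw [real_inner_comm (pd 1 n u) (pd 1 X u), real_inner_comm (pd 0 n u) (pd 0 X u)]
    rw [hpn 1 1, hpn 0 0, f8, inner_neg_right]
  -- Jacobi equation in vector form
  have hLap : ∀ i : Fin 2, ∀ k' : Fin 3,
      pd i (pd i n) u k' = pd i (pd i (fun w => n w k')) u := by
    intro i k'
    have h1 : ∀ w ∈ U, pd i (fun w' => n w' k') w = pd i n w k' := fun w hw =>
      pd_proj i k' (hnd w hw)
    calc pd i (pd i n) u k' = pd i (fun w => pd i n w k') u :=
          (pd_proj i k' (hpdn i u hu)).symm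
      _ = pd i (pd i (fun w => n w k')) u :=
          (pd_congrOn hU (fun w hw => (h1 w hw).symm) hu i)
  have fΔn : pd 0 (pd 0 n) u + pd 1 (pd 1 n) u = (2 * K u * E u) • n u := by
    ext k'
    have hj := hjac u hu k'
    rw [flatLap, ← hLap 0 k', ← hLap 1 k'] at hj
    show pd 0 (pd 0 n) u k' + pd 1 (pd 1 n) u k' = ((2 * K u * E u) • n u) k'
    rw [PiLp.smul_apply, smul_eq_mul]
    linarith
  have f9 : pd 1 (pd 1 n) u = (2 * K u * E u) • n u - pd 0 (pd 0 n) u :=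
    eq_sub_of_add_eq' fΔn
  -- scalar consequences
  have f8a : ⟪X u, pd 1 (pd 1 X) u⟫ = -⟪X u, pd 0 (pd 0 X) u⟫ := by
    rw [f8, inner_neg_right]
  have f8b : ⟪pd 1 (pd 1 X) u, n u⟫ = -⟪pd 0 (pd 0 X) u, n u⟫ := by
    rw [f8, inner_neg_left]
  have f9a : ⟪X u, pd 1 (pd 1 n) u⟫ =
      2 * K u * E u * ⟪X u, n u⟫ - ⟪X u, pd 0 (pd 0 n) u⟫ := by
    rw [f9, inner_sub_right, real_inner_smul_right]
  -- the inverted-normal function agrees with Φ on U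
  have hν : ∀ w ∈ U, ‖X w‖ ^ 2 * ν w k = Φ w k := by
    intro w hw
    have hx2 : (‖X w‖ : ℝ) ^ 2 ≠ 0 := pow_ne_zero 2 (norm_ne_zero_iff.2 (hX0 w hw))
    have h1 : ν w k = n w k - (2 * ⟪X w, n w⟫ / ‖X w‖ ^ 2) * X w k := by
      show (n w - ((2 * ⟪X w, n w⟫) / ‖X w‖ ^ 2) • X w) k = _
      rw [PiLp.sub_apply, PiLp.smul_apply, smul_eq_mul]
    have h2 : Φ w k = ⟪X w, X w⟫ * n w k - (2 * ⟪X w, n w⟫) * X w k := by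
      rw [hΦdef]
      simp only
      rw [PiLp.sub_apply, PiLp.smul_apply, PiLp.smul_apply, smul_eq_mul, smul_eq_mul]
    rw [h1, h2, real_inner_self_eq_norm_sq]
    have hx : ‖X w‖ ≠ 0 := norm_ne_zero_iff.2 (hX0 w hw)
    field_simp
  -- the flat Laplacian in terms of Φ
  have hflat : flatLap (fun w => ‖X w‖ ^ 2 * ν w k) u =
      (pd 0 (pd 0 Φ) u + pd 1 (pd 1 Φ) u) k := by
    have hstep : ∀ i : Fin 2,
        pd i (pd i (fun w => ‖X w‖ ^ 2 * ν w k)) u = pd i (pd i Φ) u k := by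
      intro i
      have h1 : ∀ w ∈ U, pd i (fun w' => ‖X w'‖ ^ 2 * ν w' k) w = pd i Φ w k := by
        intro w hw
        rw [pd_congrOn hU hν hw i]
        exact pd_proj i k (hΦd w hw)
      rw [pd_congrOn hU h1 hu i]
      exact pd_proj i k (hΦ1d i)
    rw [flatLap, hstep 0, hstep 1, PiLp.add_apply]
  -- main vector identity
  have hS := S_vanishes hEu (X u) (pd 0 X u) (pd 1 X u) (n u) (pd 0 n u) (pd 1 n u)
    fE0 fE1 f01 hp0 hp1 hn1u (hunit 0) (hunit 1) hs
  have hmain : pd 0 (pd 0 Φ) u + pd 1 (pd 1 Φ) u =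
      (4 * E u) • n u + (2 * K u * E u) • Φ u := by
    rw [← sub_eq_zero]
    rw [key 0, key 1]
    rw [f9a, f8a, f8b, ht, f9, f8]
    rw [hΦdef]
    simp only
    rw [fE0, fE1]
    trans (4:ℝ) • (⟪X u, pd 0 X u⟫ • pd 0 n u + ⟪X u, pd 1 X u⟫ • pd 1 n u
      - ⟪X u, pd 0 n u⟫ • pd 0 X u - ⟪X u, pd 1 n u⟫ • pd 1 X u)
    · match_scalars <;> ring
    · rw [hS, smul_zero]
  -- conclusion
  rw [hflat, hmain, hν u hu]
  rw [PiLp.add_apply, PiLp.smul_apply, PiLp.smul_apply, smul_eq_mul, smul_eq_mul]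
  field_simp
  ring
end
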